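/- Let F be a field of characteristic 2 and m, m' nonzero elements of t·F[[t]] with m' = a²·m·u where a ∈ F is nonzero and u ∈ F[[t]] is a unit with u ≡ 1 mod (m). Then 1/m' − a/m ∈ F[[t]], provided a³ = 1 (a ∈ F_4^× with a² = 1/a). -/

import Mathlib

theorem stmt_15 (F : Type*) [Field F] [CharP F 2]
    (a : F) (ha : a ≠ 0) (ha3 : a ^ 3 = 1)
    (m m' u : PowerSeries F)
    (hm0 : PowerSeries.constantCoeff m = 0)
    (hm : m ≠ 0) (hm' : m' ≠ 0)
    (hu : ∃ w : PowerSeries F, u = 1 + m * w)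
    (hrec : m' = PowerSeries.C (a ^ 2) * m * u) :
    ∃ g : PowerSeries F,
      ((m' : LaurentSeries F))⁻¹ -
        ((PowerSeries.C a : PowerSeries F) : LaurentSeries F) * (m : LaurentSeries F)⁻¹ =
          (g : LaurentSeries F) := by
  obtain ⟨w, hw⟩ := hu
  have hcu : PowerSeries.constantCoeff u ≠ 0 := by
    rw [hw]; simp [hm0]
  have huv : u * u⁻¹ = 1 := PowerSeries.mul_inv_cancel u hcu
  refine ⟨-(PowerSeries.C a * w * u⁻¹), ?_⟩
  set A : LaurentSeries F := ((PowerSeries.C a : PowerSeries F) : LaurentSeries F) with hAdef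
  set M : LaurentSeries F := (m : LaurentSeries F) with hMdef
  set U : LaurentSeries F := (u : LaurentSeries F) with hUdef
  set V : LaurentSeries F := ((u⁻¹ : PowerSeries F) : LaurentSeries F) with hVdef
  set W : LaurentSeries F := (w : LaurentSeries F) with hWdef
  have hinj : Function.Injective ((↑) : PowerSeries F → LaurentSeries F) :=
    HahnSeries.ofPowerSeries_injective
  have hM : M ≠ 0 := fun h => hm (hinj (by simpa using h))
  have hUV : U * V = 1 := by
    rw [hUdef, hVdef, ← PowerSeries.coe_mul, huv, PowerSeries.coe_one]
  have hMinv : M⁻¹ * M = 1 := inv_mul_cancel₀ hM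
  have hrecL : (m' : LaurentSeries F) = A ^ 2 * M * U := by
    rw [hrec, PowerSeries.coe_mul, PowerSeries.coe_mul, hAdef,
      PowerSeries.coe_C, PowerSeries.coe_C, ← map_pow]
  have hwL : U = 1 + M * W := by
    rw [hUdef, hw, PowerSeries.coe_add, PowerSeries.coe_mul, PowerSeries.coe_one]
  have ha3L : A ^ 3 = 1 := by
    rw [hAdef, PowerSeries.coe_C, ← map_pow, ha3]; simp
  have key : (A ^ 2 * M * U)⁻¹ = A * M⁻¹ * V := by
    refine (eq_inv_of_mul_eq_one_left ?_).symm
    have : A * M⁻¹ * V * (A ^ 2 * M * U) = A ^ 3 * (M⁻¹ * M) * (U * V) := by ring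
    rw [this, ha3L, hMinv, hUV]; ring
  have h1 : V - 1 = -(M * W * V) := by
    rw [hwL] at hUV
    linear_combination hUV
  rw [hrecL, key, PowerSeries.coe_neg, PowerSeries.coe_mul, PowerSeries.coe_mul,
    ← hAdef, ← hWdef, ← hVdef]
  linear_combination A * M⁻¹ * h1 - A * W * V * hMinv
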